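/- Let E be a real inner product space and F : E → ℝ be L-smooth and satisfy the Polyak–Łojasiewicz (PL) condition with constant μ > 0, with F_* = inf_w F(w) finite. Let 0 < η ≤ 1/L. Then for every w ∈ E and every vector g ∈ E, F(w − ηg) − F_* ≤ (1 − ημ)(F(w) − F_*) + (η/2)‖∇F(w) − g‖². -/

import Mathlib

open intervalIntegral RealInnerProductSpace

lemma descent {E : Type*} [NormedAddCommGroup E] [InnerProductSpace ℝ E]
    [CompleteSpace E] (F : E → ℝ) (L : ℝ) (hL : 0 < L)
    (hdiff : Differentiable ℝ F)
    (hlip : ∀ w u : E, ‖gradient F w - gradient F u‖ ≤ L * ‖w - u‖)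
    (w u : E) :
    F u ≤ F w + ⟪gradient F w, u - w⟫ + L / 2 * ‖u - w‖ ^ 2 := by
  set v := u - w with hv
  have hgcont : Continuous (fun x => gradient F x) := by
    refine (LipschitzWith.of_dist_le_mul (K := ⟨L, hL.le⟩) ?_).continuous
    intro x y
    rw [dist_eq_norm, dist_eq_norm]; exact hlip x y
  have hcurve : Continuous (fun t : ℝ => w + t • v) := by continuity
  have hφcont : Continuous (fun t : ℝ => ⟪gradient F (w + t • v), v⟫) :=
    (hgcont.comp hcurve).inner continuous_const
  have hderiv : ∀ t ∈ Set.uIcc (0:ℝ) 1,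
      HasDerivAt (fun t : ℝ => F (w + t • v)) ⟪gradient F (w + t • v), v⟫ t := by
    intro t _
    have h1 : HasDerivAt (fun t : ℝ => w + t • v) v t := by
      simpa using ((hasDerivAt_id t).smul_const v).const_add w
    have h2 := ((hdiff (w + t • v)).hasGradientAt.hasFDerivAt).comp_hasDerivAt t h1
    simpa [InnerProductSpace.toDual, Function.comp_def] using h2
  have key : F (w + (1:ℝ) • v) - F (w + (0:ℝ) • v)
      = ∫ t in (0:ℝ)..1, ⟪gradient F (w + t • v), v⟫ :=
    (integral_eq_sub_of_hasDerivAt hderiv (hφcont.intervalIntegrable 0 1)).symm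
  have hmono : (∫ t in (0:ℝ)..1, ⟪gradient F (w + t • v), v⟫)
      ≤ ∫ t in (0:ℝ)..1, (⟪gradient F w, v⟫ + (L * ‖v‖ ^ 2) * t) := by
    apply integral_mono_on (by norm_num) (hφcont.intervalIntegrable 0 1)
      ((by continuity : Continuous fun t : ℝ => ⟪gradient F w, v⟫ + (L * ‖v‖^2) * t).intervalIntegrable 0 1)
    intro t ht
    have hb : ⟪gradient F (w + t • v) - gradient F w, v⟫ ≤ (L * ‖v‖ ^ 2) * t := by
      calc ⟪gradient F (w + t • v) - gradient F w, v⟫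
          ≤ ‖gradient F (w + t • v) - gradient F w‖ * ‖v‖ := real_inner_le_norm _ _
        _ ≤ (L * ‖(w + t • v) - w‖) * ‖v‖ :=
            mul_le_mul_of_nonneg_right (hlip _ _) (norm_nonneg _)
        _ = (L * ‖v‖ ^ 2) * t := by
            rw [show (w + t • v) - w = t • v by abel, norm_smul]
            simp [abs_of_nonneg ht.1]; ring
    have hexp : ⟪gradient F (w + t • v), v⟫
        = ⟪gradient F w, v⟫ + ⟪gradient F (w + t • v) - gradient F w, v⟫ := by
      rw [inner_sub_left]; ring
    linarith
  have hint : (∫ t in (0:ℝ)..1, (⟪gradient F w, v⟫ + (L * ‖v‖ ^ 2) * t))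
      = ⟪gradient F w, v⟫ + L / 2 * ‖v‖ ^ 2 := by
    have h1 : IntervalIntegrable (fun t : ℝ => (L * ‖v‖ ^ 2) * t)
        MeasureTheory.volume 0 1 := (continuous_const.mul continuous_id').intervalIntegrable 0 1
    rw [integral_add intervalIntegrable_const h1, integral_const, integral_const_mul, integral_id]
    norm_num
    ring
  have h0 : w + (0:ℝ) • v = w := by simp
  have h1 : w + (1:ℝ) • v = u := by simp [hv]
  rw [h0, h1] at key
  linarith



/-- **One-step contraction under the PL condition.** If `F` is `L`-smooth and satisfies the
Polyak–Łojasiewicz condition with constant `μ > 0` (with finite infimum `F_*`), then for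
`0 < η ≤ 1/L`, every `w` and every `g`,
`F(w - ηg) - F_* ≤ (1 - ημ)(F(w) - F_*) + (η/2)‖∇F(w) - g‖²`. -/
theorem pl_step_biased {E : Type*} [NormedAddCommGroup E] [InnerProductSpace ℝ E]
    [CompleteSpace E] (F : E → ℝ) (L : ℝ) (hL : 0 < L)
    (hdiff : Differentiable ℝ F)
    (hlip : ∀ w u : E, ‖gradient F w - gradient F u‖ ≤ L * ‖w - u‖)
    (μ : ℝ) (hμ : 0 < μ) (Fstar : ℝ) (hFstar : IsGLB (Set.range F) Fstar)
    (hPL : ∀ w : E, 2 * μ * (F w - Fstar) ≤ ‖gradient F w‖ ^ 2)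
    (η : ℝ) (hη : 0 < η) (hηL : η ≤ 1 / L) :
    ∀ w g : E,
      F (w - η • g) - Fstar
        ≤ (1 - η * μ) * (F w - Fstar) + η / 2 * ‖gradient F w - g‖ ^ 2 := by
  intro w g
  have hd := descent F L hL hdiff hlip w (w - η • g)
  have hdv : (w - η • g) - w = -(η • g) := by abel
  rw [hdv] at hd
  have hinner : ⟪gradient F w, -(η • g)⟫ = -(η * ⟪gradient F w, g⟫) := by
    rw [inner_neg_right, real_inner_smul_right]
  have hnorm : ‖-(η • g)‖ ^ 2 = η ^ 2 * ‖g‖ ^ 2 := by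
    rw [norm_neg, norm_smul, mul_pow, Real.norm_eq_abs, sq_abs]
  rw [hinner, hnorm] at hd
  have hsq : ‖gradient F w - g‖ ^ 2
      = ‖gradient F w‖ ^ 2 - 2 * ⟪gradient F w, g⟫ + ‖g‖ ^ 2 := by
    rw [norm_sub_sq_real]; try ring
  have hηL' : L * η ≤ 1 := by
    have := (le_div_iff₀ hL).mp hηL; linarith
  have hPLw := hPL w
  have hηg : L / 2 * (η ^ 2 * ‖g‖ ^ 2) ≤ η / 2 * ‖g‖ ^ 2 := by
    have : L * η ^ 2 ≤ η := by nlinarith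
    nlinarith [sq_nonneg ‖g‖]
  nlinarith [sq_nonneg ‖gradient F w - g‖]
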